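/- Let X be a metric space and f : X → X a function. The autonomous dynamical system (X,f) has shadowing if and only if for all ε > 0 there exists δ > 0 such that for every sequence (g_i)_{i∈ℕ} of functions from X to X with sup_{i∈ℕ} sup_{x∈X} d(g_i(x), f(x)) < δ, every (g_i)-orbit is ε-shadowed by an f-orbit. -/

import Mathlib

open scoped ENNReal

/-- supremum distance `ρ(f,g) = sup_x d(f x, g x)` between self-maps. -/
noncomputable def rho {X : Type*} [PseudoMetricSpace X] (f g : X → X) : ℝ≥0∞ :=
  ⨆ x, edist (f x) (g x)

/-- supremum distance between sequences of self-maps. -/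
noncomputable def rhoSeq {X : Type*} [PseudoMetricSpace X] (f g : ℕ → X → X) : ℝ≥0∞ :=
  ⨆ i, rho (f i) (g i)

/-- `seqComp f i = f_{i-1} ∘ ⋯ ∘ f_0`, with `seqComp f 0 = id`. -/
def seqComp {X : Type*} (f : ℕ → X → X) : ℕ → X → X
  | 0 => id
  | n + 1 => f n ∘ seqComp f n

/-- The autonomous system `(X, f)` has shadowing. -/
def Shadowing {X : Type*} [MetricSpace X] (f : X → X) : Prop :=
  ∀ ε > (0 : ℝ), ∃ δ > (0 : ℝ), ∀ x : ℕ → X,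
    (∀ i : ℕ, dist (f (x i)) (x (i + 1)) < δ) →
    ∃ z : X, ∀ i : ℕ, dist (x i) (f^[i] z) < ε

theorem stmt3 {X : Type*} [MetricSpace X] (f : X → X) :
    Shadowing f ↔
      ∀ ε > (0 : ℝ), ∃ δ > (0 : ℝ), ∀ g : ℕ → X → X,
        rhoSeq g (fun _ => f) < ENNReal.ofReal δ →
        ∀ x : X, ∃ z : X, ∀ i : ℕ, dist (seqComp g i x) (f^[i] z) < ε := by
  constructor
  · intro hs ε hε
    obtain ⟨δ, hδ, h⟩ := hs ε hε
    refine ⟨δ, hδ, fun g hg x => ?_⟩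
    apply h (fun i => seqComp g i x)
    intro i
    have h1 : edist (g i (seqComp g i x)) (f (seqComp g i x)) < ENNReal.ofReal δ := by
      refine lt_of_le_of_lt (le_trans ?_ (le_iSup (fun j => rho (g j) f) i)) hg
      exact le_iSup (fun y => edist (g i y) (f y)) (seqComp g i x)
    rw [dist_comm]
    exact edist_lt_ofReal.mp h1
  · intro h ε hε
    obtain ⟨δ, hδ, h⟩ := h ε hε
    refine ⟨δ / 2, by linarith, fun x hx => ?_⟩
    classical
    set g : ℕ → X → X := fun i y => if y = x i then x (i + 1) else f y with hg
    have hgx : ∀ i, seqComp g i (x 0) = x i := by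
      intro i
      induction i with
      | zero => rfl
      | succ n ih =>
        show g n (seqComp g n (x 0)) = x (n + 1)
        rw [ih]; simp [hg]
    have hrho : rhoSeq g (fun _ => f) < ENNReal.ofReal δ := by
      have hle : rhoSeq g (fun _ => f) ≤ ENNReal.ofReal (δ / 2) := by
        refine iSup_le fun i => iSup_le fun y => ?_
        by_cases hy : y = x i
        · subst hy
          simp only [hg, if_pos rfl]
          rw [edist_dist]
          exact ENNReal.ofReal_le_ofReal (by rw [dist_comm]; exact (hx i).le)
        · simp [hg, hy]
      exact lt_of_le_of_lt hle (ENNReal.ofReal_lt_ofReal_iff hδ |>.mpr (by linarith))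
    obtain ⟨z, hz⟩ := h g hrho (x 0)
    refine ⟨z, fun i => ?_⟩
    have := hz i
    rwa [hgx i] at this
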